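/- Let F be H-smooth and λ-strongly convex with sup_x E_{z∼D}‖∇f(x; z) − ∇F(x)‖² ≤ σ², and run local SGD with M machines and K local steps per round with a non-increasing stepsize sequence satisfying η_t ≤ 1/H for all t. Then for every t and every machine m, E‖x_t^m − x̄_t‖² ≤ (2(M−1)(K−1)σ²/M) · η_{max(t−K+1, 0)}². -/

import Mathlib

open MeasureTheory ProbabilityTheory
open scoped RealInnerProductSpace BigOperators

/-- `Euc d` is the Euclidean space `ℝ^d`. -/
abbrev Euc (d : ℕ) : Type := EuclideanSpace ℝ (Fin d)

section Analysis
variable {d : ℕ} {H : ℝ} {F : Euc d → ℝ} {gradF : Euc d → Euc d}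

/-- descent-type lower bound -/
theorem lsgd_key (hH : 0 < H)
    (hconv : ∀ x y : Euc d, 0 ≤ F y - F x - ⟪gradF x, y - x⟫)
    (hsm : ∀ x y : Euc d, F y - F x - ⟪gradF x, y - x⟫ ≤ H / 2 * ‖y - x‖ ^ 2)
    (x y : Euc d) :
    F x + ⟪gradF x, y - x⟫ + 1 / (2 * H) * ‖gradF y - gradF x‖ ^ 2 ≤ F y := by
  set u := gradF y - gradF x with hu
  have h1 := hsm y (y - (1 / H) • u)
  have h2 := hconv x (y - (1 / H) • u)
  have e1 : (y - (1 / H) • u) - y = -((1/H) • u) := by abel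
  have e2 : ‖-((1 / H) • u)‖ ^ 2 = (1/H)^2 * ‖u‖^2 := by
    rw [norm_neg, norm_smul]
    rw [Real.norm_eq_abs, abs_of_pos (by positivity), mul_pow]
  rw [e1, e2] at h1
  have hinner1 : ⟪gradF y, -((1/H) • u)⟫ = -(1/H) * ⟪gradF y, u⟫ := by
    rw [inner_neg_right, real_inner_smul_right]; ring
  rw [hinner1] at h1
  have e3 : (y - (1 / H) • u) - x = (y - x) - (1/H) • u := by abel
  rw [e3] at h2
  have hinner2 : ⟪gradF x, (y - x) - (1/H) • u⟫
      = ⟪gradF x, y - x⟫ - (1/H) * ⟪gradF x, u⟫ := by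
    rw [inner_sub_right, real_inner_smul_right]
  rw [hinner2] at h2
  have hud : ⟪gradF y, u⟫ - ⟪gradF x, u⟫ = ‖u‖^2 := by
    rw [← inner_sub_left, ← hu, real_inner_self_eq_norm_sq]
  have hud2 : ⟪gradF y, u⟫ - ⟪gradF x, u⟫ = ‖u‖^2 := hud
  have hHne : H ≠ 0 := ne_of_gt hH
  have hA : H / 2 * ((1/H) ^ 2 * ‖u‖ ^ 2) = 1 / (2*H) * ‖u‖ ^ 2 := by
    field_simp
  have hB : (1/H) * ⟪gradF y, u⟫ - (1/H) * ⟪gradF x, u⟫ = (1/H) * ‖u‖^2 := by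
    rw [← mul_sub, hud2]
  have hC : (1/H) * ‖u‖^2 - 1/(2*H) * ‖u‖^2 = 1/(2*H) * ‖u‖^2 := by
    field_simp; ring
  rw [hA] at h1
  linarith

theorem lsgd_coco (hH : 0 < H)
    (hconv : ∀ x y : Euc d, 0 ≤ F y - F x - ⟪gradF x, y - x⟫)
    (hsm : ∀ x y : Euc d, F y - F x - ⟪gradF x, y - x⟫ ≤ H / 2 * ‖y - x‖ ^ 2)
    (x y : Euc d) :
    1 / H * ‖gradF x - gradF y‖ ^ 2 ≤ ⟪gradF x - gradF y, x - y⟫ := by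
  have h1 := lsgd_key hH hconv hsm x y
  have h2 := lsgd_key hH hconv hsm y x
  have e1 : ⟪gradF x - gradF y, x - y⟫
      = -⟪gradF x, y - x⟫ - ⟪gradF y, x - y⟫ := by
    have hx : ⟪gradF x, x - y⟫ = -⟪gradF x, y - x⟫ := by
      rw [show (x : Euc d) - y = -(y - x) by abel, inner_neg_right]
    rw [inner_sub_left, hx]
  have e2 : ‖gradF x - gradF y‖ ^ 2 = ‖gradF y - gradF x‖ ^ 2 := by
    rw [show gradF x - gradF y = -(gradF y - gradF x) by abel, norm_neg]
  have hHne : H ≠ 0 := ne_of_gt hH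
  have hs : 1 / (2*H) * ‖gradF y - gradF x‖ ^ 2 + 1 / (2*H) * ‖gradF x - gradF y‖ ^ 2
      = 1 / H * ‖gradF x - gradF y‖ ^ 2 := by
    rw [e2]; field_simp; ring
  rw [e1]
  nlinarith [h1, h2, hs]

theorem lsgd_lip (hH : 0 < H)
    (hconv : ∀ x y : Euc d, 0 ≤ F y - F x - ⟪gradF x, y - x⟫)
    (hsm : ∀ x y : Euc d, F y - F x - ⟪gradF x, y - x⟫ ≤ H / 2 * ‖y - x‖ ^ 2)
    (x y : Euc d) : ‖gradF x - gradF y‖ ≤ H * ‖x - y‖ := by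
  have h := lsgd_coco hH hconv hsm x y
  have hcs : ⟪gradF x - gradF y, x - y⟫ ≤ ‖gradF x - gradF y‖ * ‖x - y‖ :=
    real_inner_le_norm _ _
  rcases eq_or_lt_of_le (norm_nonneg (gradF x - gradF y)) with h0 | h0
  · rw [← h0]; positivity
  · have := h.trans hcs
    rw [pow_two] at this
    have h2 : 1/H * ‖gradF x - gradF y‖ ≤ ‖x - y‖ := by
      refine le_of_mul_le_mul_right ?_ h0
      nlinarith [this]
    calc ‖gradF x - gradF y‖ = H * (1/H * ‖gradF x - gradF y‖) := by
          field_simp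
      _ ≤ H * ‖x - y‖ := by
          exact mul_le_mul_of_nonneg_left h2 hH.le

theorem lsgd_nonexp (hH : 0 < H)
    (hconv : ∀ x y : Euc d, 0 ≤ F y - F x - ⟪gradF x, y - x⟫)
    (hsm : ∀ x y : Euc d, F y - F x - ⟪gradF x, y - x⟫ ≤ H / 2 * ‖y - x‖ ^ 2)
    {c : ℝ} (hc : 0 < c) (hcH : c ≤ 1 / H) (x y : Euc d) :
    ‖(x - c • gradF x) - (y - c • gradF y)‖ ^ 2 ≤ ‖x - y‖ ^ 2 := by
  have e : (x - c • gradF x) - (y - c • gradF y) = (x - y) - c • (gradF x - gradF y) := by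
    rw [smul_sub]; abel
  rw [e, norm_sub_sq_real, real_inner_smul_right, norm_smul, Real.norm_eq_abs,
    abs_of_pos hc, mul_pow]
  have hco := lsgd_coco hH hconv hsm x y
  have hinner : ⟪x - y, gradF x - gradF y⟫ = ⟪gradF x - gradF y, x - y⟫ :=
    real_inner_comm _ _
  rw [hinner]
  have hHpos : (0:ℝ) < 1 / H := by positivity
  nlinarith [sq_nonneg ‖gradF x - gradF y‖, mul_le_mul_of_nonneg_left hco hc.le,
    mul_le_mul_of_nonneg_right hcH (sq_nonneg ‖gradF x - gradF y‖),
    mul_pos hc hH]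

end Analysis

section Prob

variable {Ω Z : Type} [MeasurableSpace Ω] [MeasurableSpace Z]
  {P : Measure Ω} {D : Measure Z} [IsProbabilityMeasure P] [IsProbabilityMeasure D]
  {d : ℕ} {g : Euc d → Z → Euc d} {gradF : Euc d → Euc d}

theorem lsgd_integrable_inner {f h : Ω → Euc d} (hf : MemLp f 2 P) (hh : MemLp h 2 P) :
    Integrable (fun ω => ⟪f ω, h ω⟫) P := by
  have := L2.integrable_inner (𝕜 := ℝ) (hf.toLp f) (hh.toLp h)
  refine this.congr ?_
  filter_upwards [hf.coeFn_toLp, hh.coeFn_toLp] with ω h1 h2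
  rw [h1, h2]

theorem lsgd_integrable_normsq {f : Ω → Euc d} (hf : MemLp f 2 P) :
    Integrable (fun ω => ‖f ω‖ ^ 2) P := by
  refine (lsgd_integrable_inner hf hf).congr
    (Filter.Eventually.of_forall fun ω => real_inner_self_eq_norm_sq _)

theorem lsgd_cross_zero
    (hgmeas : Measurable (Function.uncurry g)) (hgradmeas : Measurable gradF)
    (hunb : ∀ x, ∫ z, g x z ∂D = gradF x)
    {α : Type} [MeasurableSpace α] (W : Ω → α) (V : Ω → Z)
    (hW : Measurable W) (hV : Measurable V) (hWV : IndepFun W V P)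
    (hVlaw : Measure.map V P = D)
    (a b : α → Euc d) (ha : Measurable a) (hb : Measurable b)
    (hint1 : Integrable (fun ω => g (b (W ω)) (V ω)) P)
    (hint2 : Integrable (fun ω => ⟪a (W ω), g (b (W ω)) (V ω) - gradF (b (W ω))⟫) P) :
    ∫ ω, ⟪a (W ω), g (b (W ω)) (V ω) - gradF (b (W ω))⟫ ∂P = 0 := by
  set μ := P.map W with hμ
  have hTmeas : Measurable (fun ω => (W ω, V ω)) := hW.prodMk hV
  have hTlaw : P.map (fun ω => (W ω, V ω)) = μ.prod D := by
    rw [hμ, ← hVlaw]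
    exact (indepFun_iff_map_prod_eq_prod_map_map hW.aemeasurable hV.aemeasurable).mp hWV
  set h : α × Z → ℝ := fun p => ⟪a p.1, g (b p.1) p.2 - gradF (b p.1)⟫ with hh
  have hbW : Measurable fun p : α × Z => b p.1 := hb.comp measurable_fst
  have hgp : Measurable fun p : α × Z => g (b p.1) p.2 :=
    hgmeas.comp (hbW.prodMk measurable_snd)
  have hmeas_h : Measurable h :=
    (ha.comp measurable_fst).inner (hgp.sub (hgradmeas.comp hbW))
  set hgfun : α × Z → Euc d := fun p => g (b p.1) p.2 with hhg
  have hinth : Integrable h (μ.prod D) := by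
    rw [← hTlaw]
    exact (integrable_map_measure hmeas_h.aestronglyMeasurable hTmeas.aemeasurable).mpr hint2
  have hintg : Integrable hgfun (μ.prod D) := by
    rw [← hTlaw]
    exact (integrable_map_measure hgp.aestronglyMeasurable hTmeas.aemeasurable).mpr hint1
  have hsec : ∀ᵐ w ∂μ, Integrable (fun v => g (b w) v) D := hintg.prod_right_ae
  have step1 : ∫ ω, ⟪a (W ω), g (b (W ω)) (V ω) - gradF (b (W ω))⟫ ∂P
      = ∫ p, h p ∂(μ.prod D) := by
    rw [← hTlaw, integral_map hTmeas.aemeasurable hmeas_h.aestronglyMeasurable]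
  rw [step1, integral_prod h hinth]
  have step2 : ∀ᵐ w ∂μ, (∫ v, h (w, v) ∂D) = 0 := by
    filter_upwards [hsec] with w hw
    have : (∫ v, h (w, v) ∂D) = ⟪a w, ∫ v, (g (b w) v - gradF (b w)) ∂D⟫ :=
      integral_inner (f := fun v => g (b w) v - gradF (b w))
        (hw.sub (integrable_const _)) (a w)
    rw [this, integral_sub hw (integrable_const _), hunb, integral_const]
    simp
  rw [integral_congr_ae step2]
  simp

theorem lsgd_var_bound {σ : ℝ}
    (hgmeas : Measurable (Function.uncurry g)) (hgradmeas : Measurable gradF)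
    (hvar : ∀ x, ∫ z, ‖g x z - gradF x‖ ^ 2 ∂D ≤ σ ^ 2)
    {α : Type} [MeasurableSpace α] (W : Ω → α) (V : Ω → Z)
    (hW : Measurable W) (hV : Measurable V) (hWV : IndepFun W V P)
    (hVlaw : Measure.map V P = D) (b : α → Euc d) (hb : Measurable b) :
    ∫ ω, ‖g (b (W ω)) (V ω) - gradF (b (W ω))‖ ^ 2 ∂P ≤ σ ^ 2 := by
  set μ := P.map W with hμ
  have hTmeas : Measurable (fun ω => (W ω, V ω)) := hW.prodMk hV
  have hTlaw : P.map (fun ω => (W ω, V ω)) = μ.prod D := by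
    rw [hμ, ← hVlaw]
    exact (indepFun_iff_map_prod_eq_prod_map_map hW.aemeasurable hV.aemeasurable).mp hWV
  set h : α × Z → ℝ := fun p => ‖g (b p.1) p.2 - gradF (b p.1)‖ ^ 2 with hh
  have hbW : Measurable fun p : α × Z => b p.1 := hb.comp measurable_fst
  have hgp : Measurable fun p : α × Z => g (b p.1) p.2 :=
    hgmeas.comp (hbW.prodMk measurable_snd)
  have hmeas_h : Measurable h := ((hgp.sub (hgradmeas.comp hbW)).norm.pow_const 2)
  have step1 : ∫ ω, ‖g (b (W ω)) (V ω) - gradF (b (W ω))‖ ^ 2 ∂P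
      = ∫ p, h p ∂(μ.prod D) := by
    rw [← hTlaw, integral_map hTmeas.aemeasurable hmeas_h.aestronglyMeasurable]
  rw [step1]
  by_cases hint : Integrable h (μ.prod D)
  · rw [integral_prod h hint]
    have hle : ∀ w, (∫ v, h (w, v) ∂D) ≤ σ ^ 2 := fun w => hvar (b w)
    have hnn : ∀ w, 0 ≤ (∫ v, h (w, v) ∂D) := fun w =>
      integral_nonneg fun v => sq_nonneg _
    calc ∫ w, (∫ v, h (w, v) ∂D) ∂μ ≤ ∫ _, σ ^ 2 ∂μ := by
          refine integral_mono_of_nonneg (Filter.Eventually.of_forall hnn)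
            (integrable_const _) (Filter.Eventually.of_forall hle)
      _ = σ ^ 2 := by
          have : IsProbabilityMeasure μ := Measure.isProbabilityMeasure_map hW.aemeasurable
          simp
  · rw [integral_undef hint]
    positivity

end Prob

set_option maxHeartbeats 1000000 in
/-- For `F` `H`-smooth and `λ`-strongly convex with stochastic gradient
variance at most `σ²`, local SGD with `M` machines, `K` local steps per round and a
non-increasing stepsize sequence `η t ≤ 1/H` satisfies, for every `t` and machine `m`,
`E‖x t m − x̄ t‖² ≤ (2(M−1)(K−1)σ²/M) · η_{max(t−K+1,0)}²`.  (In `ℕ`-subtraction,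
`max(t−K+1, 0)` is `t + 1 - K`.) -/
theorem local_sgd_iterate_dispersion_bound
    (d : ℕ) (H lam σ : ℝ) (hH : 0 < H) (hlam : 0 ≤ lam)
    (Z : Type) [MeasurableSpace Z] (D : Measure Z) [IsProbabilityMeasure D]
    (f : Euc d → Z → ℝ) (F : Euc d → ℝ) (gradF : Euc d → Euc d)
    (g : Euc d → Z → Euc d)
    (hF : ∀ x, F x = ∫ z, f x z ∂D)
    (hfgrad : ∀ x z, HasGradientAt (fun y => f y z) (g x z) x)
    (hunb : ∀ x, ∫ z, g x z ∂D = gradF x)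
    (hvar : ∀ x, ∫ z, ‖g x z - gradF x‖ ^ 2 ∂D ≤ σ ^ 2)
    (hFgrad : ∀ x, HasGradientAt F (gradF x) x)
    (hsc : ∀ x y, lam / 2 * ‖y - x‖ ^ 2 ≤ F y - F x - ⟪gradF x, y - x⟫)
    (hsm : ∀ x y, F y - F x - ⟪gradF x, y - x⟫ ≤ H / 2 * ‖y - x‖ ^ 2)
    (M K : ℕ) (hM : 1 ≤ M) (hK : 1 ≤ K)
    (η : ℕ → ℝ) (hηpos : ∀ t, 0 < η t) (hηH : ∀ t, η t ≤ 1 / H)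
    (hηmono : ∀ s t, s ≤ t → η t ≤ η s)
    (Ω : Type) [MeasurableSpace Ω] (P : Measure Ω) [IsProbabilityMeasure P]
    (z : ℕ → Fin M → Ω → Z)
    (hzmeas : ∀ t m, Measurable (z t m))
    (hzlaw : ∀ t m, Measure.map (z t m) P = D)
    (hziid : iIndepFun (fun p : ℕ × Fin M => z p.1 p.2) P)
    (hgmeas : Measurable (Function.uncurry g))
    (x : ℕ → Fin M → Ω → Euc d)
    (hx0 : ∀ m ω, x 0 m ω = 0)
    (hxup : ∀ t m ω, x (t + 1) m ω =
      if (t + 1) % K = 0 then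
        (M : ℝ)⁻¹ • ∑ m' : Fin M, (x t m' ω - η t • g (x t m' ω) (z t m' ω))
      else x t m ω - η t • g (x t m ω) (z t m ω))
    (hxL2 : ∀ t m, MemLp (x t m) 2 P)
    (hgL2 : ∀ t m, MemLp (fun ω => g (x t m ω) (z t m ω)) 2 P) :
    ∀ (t : ℕ) (m : Fin M),
      ∫ ω, ‖x t m ω - (M : ℝ)⁻¹ • ∑ m' : Fin M, x t m' ω‖ ^ 2 ∂P
        ≤ 2 * ((M : ℝ) - 1) * ((K : ℝ) - 1) * σ ^ 2 / M * η (t + 1 - K) ^ 2 := by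
  classical
  have hσ2 : (0:ℝ) ≤ σ ^ 2 := sq_nonneg σ
  have hconv : ∀ a b : Euc d, 0 ≤ F b - F a - ⟪gradF a, b - a⟫ := fun a b =>
    le_trans (by positivity) (hsc a b)
  -- gradient is Lipschitz, hence continuous and measurable
  have hgradlip : ∀ a b : Euc d, ‖gradF a - gradF b‖ ≤ H * ‖a - b‖ :=
    fun a b => lsgd_lip hH hconv hsm a b
  have hgradcont : Continuous gradF := by
    have : LipschitzWith H.toNNReal gradF := by
      refine LipschitzWith.of_dist_le_mul fun a b => ?_
      rw [dist_eq_norm, dist_eq_norm, Real.coe_toNNReal H hH.le]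
      exact hgradlip a b
    exact this.continuous
  have hgradmeas : Measurable gradF := hgradcont.measurable
  -- gradF ∘ x is in L2
  have hgradL2 : ∀ t m, MemLp (fun ω => gradF (x t m ω)) 2 P := by
    intro t m
    have hmeas : AEStronglyMeasurable (fun ω => gradF (x t m ω)) P :=
      hgradcont.comp_aestronglyMeasurable (hxL2 t m).aestronglyMeasurable
    refine MemLp.of_le ((memLp_const ‖gradF 0‖).add (((hxL2 t m).norm.const_mul H)))
      hmeas (Filter.Eventually.of_forall fun ω => ?_)
    have h1 : ‖gradF (x t m ω)‖ ≤ ‖gradF 0‖ + H * ‖x t m ω‖ := by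
      have h2 := hgradlip (x t m ω) 0
      rw [sub_zero] at h2
      calc ‖gradF (x t m ω)‖ = ‖gradF (x t m ω) - gradF 0 + gradF 0‖ := by
            congr 1
            abel
        _ ≤ ‖gradF (x t m ω) - gradF 0‖ + ‖gradF 0‖ := norm_add_le _ _
        _ ≤ ‖gradF 0‖ + H * ‖x t m ω‖ := by linarith
    exact h1.trans (le_abs_self _)
  have hxiL2 : ∀ t m, MemLp (fun ω => g (x t m ω) (z t m ω) - gradF (x t m ω)) 2 P :=
    fun t m => (hgL2 t m).sub (hgradL2 t m)
  -- representation of iterates as functions of past randomness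
  have hrep : ∀ t : ℕ, ∃ Φ : Fin M → (Fin t → Fin M → Z) → Euc d,
      (∀ m, Measurable (Φ m)) ∧ ∀ m ω, x t m ω = Φ m (fun s m' => z s.1 m' ω) := by
    intro t
    induction t with
    | zero => exact ⟨fun _ _ => 0, fun _ => measurable_const, fun m ω => hx0 m ω⟩
    | succ t ih =>
      obtain ⟨Φ, hΦm, hΦe⟩ := ih
      have hrm : Measurable (fun (w : Fin (t+1) → Fin M → Z) (s : Fin t) => w s.castSucc) :=
        measurable_pi_lambda _ fun s => measurable_pi_apply _
      refine ⟨fun m w => if (t+1) % K = 0 then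
          (M:ℝ)⁻¹ • ∑ m' : Fin M, (Φ m' (fun s => w s.castSucc)
            - η t • g (Φ m' (fun s => w s.castSucc)) (w (Fin.last t) m'))
        else Φ m (fun s => w s.castSucc)
            - η t • g (Φ m (fun s => w s.castSucc)) (w (Fin.last t) m), ?_, ?_⟩
      · intro m
        have hterm : ∀ m' : Fin M, Measurable (fun (w : Fin (t+1) → Fin M → Z) =>
            Φ m' (fun s => w s.castSucc)
              - η t • g (Φ m' (fun s => w s.castSucc)) (w (Fin.last t) m')) := by
          intro m'
          have h1 : Measurable fun (w : Fin (t+1) → Fin M → Z) => Φ m' (fun s => w s.castSucc) :=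
            (hΦm m').comp hrm
          have h2 : Measurable fun (w : Fin (t+1) → Fin M → Z) => w (Fin.last t) m' :=
            (measurable_pi_apply m').comp (measurable_pi_apply (Fin.last t))
          exact h1.sub ((hgmeas.comp (h1.prodMk h2)).const_smul (η t))
        by_cases h : (t+1) % K = 0
        · simp only [h, if_true]
          exact (Finset.measurable_sum _ fun m' _ => hterm m').const_smul ((M:ℝ)⁻¹)
        · simp only [h, if_false]
          exact hterm m
      · intro m ω
        rw [hxup t m ω]
        have hre : (fun (s : Fin t) => (fun (s' : Fin (t+1)) (m'' : Fin M) => z s'.1 m'' ω) s.castSucc)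
            = fun (s : Fin t) (m'' : Fin M) => z s.1 m'' ω := rfl
        by_cases h : (t+1) % K = 0 <;>
          simp only [h, if_true, if_false, hre, Fin.val_last, hΦe]
  -- independence of past from fresh samples
  have hindgen : ∀ (S : Finset (ℕ × Fin M)) (s : ℕ) (mm : Fin M), (s, mm) ∉ S →
      IndepFun (fun ω (i : S) => z i.1.1 i.1.2 ω) (z s mm) P := by
    intro S s mm hmem
    have hdisj : Disjoint S ({(s, mm)} : Finset (ℕ × Fin M)) := by
      simp [Finset.disjoint_singleton_right, hmem]
    have h := hziid.indepFun_finset S {(s, mm)} hdisj (fun p => hzmeas p.1 p.2)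
    exact h.comp measurable_id
      (measurable_pi_apply (⟨(s, mm), Finset.mem_singleton_self _⟩ :
        ({(s, mm)} : Finset (ℕ × Fin M))))
  have hindW : ∀ (t : ℕ) (mm : Fin M),
      IndepFun (fun ω (s : Fin t) (m' : Fin M) => z s.1 m' ω) (z t mm) P := by
    intro t mm
    have hmem : (t, mm) ∉ (Finset.range t ×ˢ (Finset.univ : Finset (Fin M))) := by
      simp
    have h := hindgen _ t mm hmem
    have hφm : Measurable (fun (v : (i : (Finset.range t ×ˢ (Finset.univ : Finset (Fin M)))) → Z)
        (s : Fin t) (m' : Fin M) => v ⟨(s.1, m'), by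
          simp only [Finset.mem_product, Finset.mem_range, Finset.mem_univ, and_true]
          exact s.2⟩) :=
      measurable_pi_lambda _ fun s => measurable_pi_lambda _ fun m' => measurable_pi_apply _
    exact h.comp hφm measurable_id
  have hindW2 : ∀ (t : ℕ) (mm m' : Fin M), m' ≠ mm →
      IndepFun (fun ω => ((fun (s : Fin t) (m'' : Fin M) => z s.1 m'' ω), z t mm ω))
        (z t m') P := by
    intro t mm m' hne
    set S : Finset (ℕ × Fin M) := insert (t, mm) (Finset.range t ×ˢ Finset.univ) with hS
    have hmem : (t, m') ∉ S := by
      simp [hS, hne]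
    have h := hindgen S t m' hmem
    have hφm : Measurable (fun (v : (i : S) → Z) =>
        ((fun (s : Fin t) (m'' : Fin M) => v ⟨(s.1, m''), by
          rw [hS]
          refine Finset.mem_insert_of_mem ?_
          simp only [Finset.mem_product, Finset.mem_range, Finset.mem_univ, and_true]
          exact s.2⟩),
         v ⟨(t, mm), by rw [hS]; exact Finset.mem_insert_self _ _⟩)) := by
      refine Measurable.prodMk ?_ (measurable_pi_apply _)
      exact measurable_pi_lambda _ fun s => measurable_pi_lambda _ fun m'' => measurable_pi_apply _
    exact h.comp hφm measurable_id
  -- one local step increases expected squared difference of two machines by ≤ 2σ²η²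
  have hDrec : ∀ (t : ℕ) (m m' : Fin M), m ≠ m' → (t + 1) % K ≠ 0 →
      ∫ ω, ‖x (t+1) m ω - x (t+1) m' ω‖ ^ 2 ∂P
        ≤ (∫ ω, ‖x t m ω - x t m' ω‖ ^ 2 ∂P) + 2 * σ ^ 2 * η t ^ 2 := by
    intro t m m' hmm hK0
    obtain ⟨Φ, hΦm, hΦe⟩ := hrep t
    set A : Ω → Euc d := fun ω =>
      (x t m ω - η t • gradF (x t m ω)) - (x t m' ω - η t • gradF (x t m' ω)) with hA
    set ξ : Fin M → Ω → Euc d :=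
      fun mm ω => g (x t mm ω) (z t mm ω) - gradF (x t mm ω) with hξ
    have hAL2 : MemLp A 2 P :=
      ((hxL2 t m).sub ((hgradL2 t m).const_smul (η t))).sub
        ((hxL2 t m').sub ((hgradL2 t m').const_smul (η t)))
    have hξL2 : ∀ mm, MemLp (ξ mm) 2 P := fun mm => hxiL2 t mm
    -- pointwise expansion
    have hpt : ∀ ω, x (t+1) m ω - x (t+1) m' ω = A ω - η t • (ξ m ω - ξ m' ω) := by
      intro ω
      rw [hxup t m ω, hxup t m' ω, if_neg hK0, if_neg hK0]
      simp only [hA, hξ]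
      module
    have hexp : ∀ ω, ‖x (t+1) m ω - x (t+1) m' ω‖ ^ 2
        = ‖A ω‖ ^ 2 - 2 * (η t * (⟪A ω, ξ m ω⟫ - ⟪A ω, ξ m' ω⟫))
          + η t ^ 2 * ‖ξ m ω - ξ m' ω‖ ^ 2 := by
      intro ω
      rw [hpt ω, norm_sub_sq_real, real_inner_smul_right, inner_sub_right, norm_smul,
        Real.norm_eq_abs, abs_of_pos (hηpos t), mul_pow]
    -- integrability facts
    have hintA2 : Integrable (fun ω => ‖A ω‖ ^ 2) P := lsgd_integrable_normsq hAL2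
    have hintζ2 : Integrable (fun ω => ‖ξ m ω - ξ m' ω‖ ^ 2) P :=
      lsgd_integrable_normsq ((hξL2 m).sub (hξL2 m'))
    have hintAmm : ∀ mm, Integrable (fun ω => ⟪A ω, ξ mm ω⟫) P :=
      fun mm => lsgd_integrable_inner hAL2 (hξL2 mm)
    have hintmm' : Integrable (fun ω => ⟪ξ m ω, ξ m' ω⟫) P :=
      lsgd_integrable_inner (hξL2 m) (hξL2 m')
    have hintm2 : ∀ mm, Integrable (fun ω => ‖ξ mm ω‖ ^ 2) P :=
      fun mm => lsgd_integrable_normsq (hξL2 mm)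
    -- cross terms vanish
    have hcrossA : ∀ mm : Fin M, (∫ ω, ⟪A ω, ξ mm ω⟫ ∂P) = 0 := by
      intro mm
      have := lsgd_cross_zero (P := P) (D := D) hgmeas hgradmeas hunb
        (fun ω (s : Fin t) (m'' : Fin M) => z s.1 m'' ω) (z t mm)
        (measurable_pi_lambda _ fun s => measurable_pi_lambda _ fun m'' => hzmeas s.1 m'')
        (hzmeas t mm) (hindW t mm) (hzlaw t mm)
        (fun w => (Φ m w - η t • gradF (Φ m w)) - (Φ m' w - η t • gradF (Φ m' w)))
        (Φ mm)
        (((hΦm m).sub ((hgradmeas.comp (hΦm m)).const_smul (η t))).sub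
          ((hΦm m').sub ((hgradmeas.comp (hΦm m')).const_smul (η t))))
        (hΦm mm) ?_ ?_
      · rw [← this]
        refine integral_congr_ae (Filter.Eventually.of_forall fun ω => ?_)
        simp only [hA, hξ, hΦe]
      · have h2 := (hgL2 t mm).integrable one_le_two
        refine h2.congr (Filter.Eventually.of_forall fun ω => ?_)
        simp only [hΦe]
      · refine (hintAmm mm).congr (Filter.Eventually.of_forall fun ω => ?_)
        simp only [hA, hξ, hΦe]
    -- the two fresh noises are uncorrelated
    have hcross2 : (∫ ω, ⟪ξ m ω, ξ m' ω⟫ ∂P) = 0 := by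
      have := lsgd_cross_zero (P := P) (D := D) hgmeas hgradmeas hunb
        (fun ω => ((fun (s : Fin t) (m'' : Fin M) => z s.1 m'' ω), z t m ω)) (z t m')
        ((measurable_pi_lambda _ fun (s : Fin t) => measurable_pi_lambda _ fun (m'' : Fin M) =>
          hzmeas s.1 m'').prodMk (hzmeas t m))
        (hzmeas t m') (hindW2 t m m' (Ne.symm hmm)) (hzlaw t m')
        (fun p => g (Φ m p.1) p.2 - gradF (Φ m p.1))
        (fun p => Φ m' p.1)
        ((hgmeas.comp (((hΦm m).comp measurable_fst).prodMk measurable_snd)).sub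
          (hgradmeas.comp ((hΦm m).comp measurable_fst)))
        ((hΦm m').comp measurable_fst) ?_ ?_
      · rw [← this]
        refine integral_congr_ae (Filter.Eventually.of_forall fun ω => ?_)
        simp only [hξ, hΦe]
      · have h2 := (hgL2 t m').integrable one_le_two
        refine h2.congr (Filter.Eventually.of_forall fun ω => ?_)
        simp only [hΦe]
      · refine hintmm'.congr (Filter.Eventually.of_forall fun ω => ?_)
        simp only [hξ, hΦe]
    -- each noise has second moment at most σ²
    have hvarm : ∀ mm : Fin M, (∫ ω, ‖ξ mm ω‖ ^ 2 ∂P) ≤ σ ^ 2 := by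
      intro mm
      have := lsgd_var_bound (P := P) (D := D) hgmeas hgradmeas hvar
        (fun ω (s : Fin t) (m'' : Fin M) => z s.1 m'' ω) (z t mm)
        (measurable_pi_lambda _ fun s => measurable_pi_lambda _ fun m'' => hzmeas s.1 m'')
        (hzmeas t mm) (hindW t mm) (hzlaw t mm) (Φ mm) (hΦm mm)
      refine le_trans (le_of_eq ?_) this
      refine integral_congr_ae (Filter.Eventually.of_forall fun ω => ?_)
      simp only [hξ, hΦe]
    -- second moment of the noise difference
    have hζbound : (∫ ω, ‖ξ m ω - ξ m' ω‖ ^ 2 ∂P) ≤ 2 * σ ^ 2 := by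
      have hexp2 : ∀ ω, ‖ξ m ω - ξ m' ω‖ ^ 2
          = ‖ξ m ω‖ ^ 2 - 2 * ⟪ξ m ω, ξ m' ω⟫ + ‖ξ m' ω‖ ^ 2 :=
        fun ω => norm_sub_sq_real _ _
      have hsub1 : Integrable (fun a => ‖ξ m a‖ ^ 2 - 2 * ⟪ξ m a, ξ m' a⟫) P :=
        (hintm2 m).sub (hintmm'.const_mul 2)
      have I1 : ∫ a, (‖ξ m a‖ ^ 2 - 2 * ⟪ξ m a, ξ m' a⟫ + ‖ξ m' a‖ ^ 2) ∂P
          = (∫ a, (‖ξ m a‖ ^ 2 - 2 * ⟪ξ m a, ξ m' a⟫) ∂P) + ∫ a, ‖ξ m' a‖ ^ 2 ∂P :=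
        integral_add hsub1 (hintm2 m')
      have I2 : ∫ a, (‖ξ m a‖ ^ 2 - 2 * ⟪ξ m a, ξ m' a⟫) ∂P
          = (∫ a, ‖ξ m a‖ ^ 2 ∂P) - ∫ a, 2 * ⟪ξ m a, ξ m' a⟫ ∂P :=
        integral_sub (hintm2 m) (hintmm'.const_mul 2)
      have I3 : ∫ a, 2 * ⟪ξ m a, ξ m' a⟫ ∂P = 2 * ∫ a, ⟪ξ m a, ξ m' a⟫ ∂P :=
        integral_const_mul 2 _
      have e1 : (∫ ω, ‖ξ m ω - ξ m' ω‖ ^ 2 ∂P)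
          = (∫ ω, ‖ξ m ω‖ ^ 2 ∂P) - 2 * (∫ ω, ⟪ξ m ω, ξ m' ω⟫ ∂P)
            + (∫ ω, ‖ξ m' ω‖ ^ 2 ∂P) := by
        rw [integral_congr_ae (Filter.Eventually.of_forall hexp2), I1, I2, I3]
      rw [e1, hcross2]
      have := hvarm m
      have := hvarm m'
      linarith
    -- contraction of the deterministic part
    have hAbound : (∫ ω, ‖A ω‖ ^ 2 ∂P) ≤ ∫ ω, ‖x t m ω - x t m' ω‖ ^ 2 ∂P := by
      refine integral_mono hintA2 (lsgd_integrable_normsq ((hxL2 t m).sub (hxL2 t m')))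
        fun ω => ?_
      exact lsgd_nonexp hH hconv hsm (hηpos t) (hηH t) (x t m ω) (x t m' ω)
    -- put it together
    have e2 : (∫ ω, ‖x (t+1) m ω - x (t+1) m' ω‖ ^ 2 ∂P)
        = (∫ ω, ‖A ω‖ ^ 2 ∂P)
          - 2 * (η t * ((∫ ω, ⟪A ω, ξ m ω⟫ ∂P) - (∫ ω, ⟪A ω, ξ m' ω⟫ ∂P)))
          + η t ^ 2 * (∫ ω, ‖ξ m ω - ξ m' ω‖ ^ 2 ∂P) := by
      have hsubA : Integrable
          (fun a => ‖A a‖ ^ 2 - 2 * (η t * (⟪A a, ξ m a⟫ - ⟪A a, ξ m' a⟫))) P :=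
        hintA2.sub ((((hintAmm m).sub (hintAmm m')).const_mul (η t)).const_mul 2)
      have hmul : Integrable (fun a => η t * (⟪A a, ξ m a⟫ - ⟪A a, ξ m' a⟫)) P :=
        ((hintAmm m).sub (hintAmm m')).const_mul (η t)
      have J1 : ∫ a, (‖A a‖ ^ 2 - 2 * (η t * (⟪A a, ξ m a⟫ - ⟪A a, ξ m' a⟫))
            + η t ^ 2 * ‖ξ m a - ξ m' a‖ ^ 2) ∂P
          = (∫ a, (‖A a‖ ^ 2 - 2 * (η t * (⟪A a, ξ m a⟫ - ⟪A a, ξ m' a⟫))) ∂P)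
            + ∫ a, η t ^ 2 * ‖ξ m a - ξ m' a‖ ^ 2 ∂P :=
        integral_add hsubA (hintζ2.const_mul _)
      have J2 : ∫ a, (‖A a‖ ^ 2 - 2 * (η t * (⟪A a, ξ m a⟫ - ⟪A a, ξ m' a⟫))) ∂P
          = (∫ a, ‖A a‖ ^ 2 ∂P) - ∫ a, 2 * (η t * (⟪A a, ξ m a⟫ - ⟪A a, ξ m' a⟫)) ∂P :=
        integral_sub hintA2 (hmul.const_mul 2)
      have J3 : ∫ a, 2 * (η t * (⟪A a, ξ m a⟫ - ⟪A a, ξ m' a⟫)) ∂P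
          = 2 * ∫ a, η t * (⟪A a, ξ m a⟫ - ⟪A a, ξ m' a⟫) ∂P := integral_const_mul 2 _
      have J4 : ∫ a, η t * (⟪A a, ξ m a⟫ - ⟪A a, ξ m' a⟫) ∂P
          = η t * ∫ a, (⟪A a, ξ m a⟫ - ⟪A a, ξ m' a⟫) ∂P := integral_const_mul _ _
      have J5 : ∫ a, (⟪A a, ξ m a⟫ - ⟪A a, ξ m' a⟫) ∂P
          = (∫ a, ⟪A a, ξ m a⟫ ∂P) - ∫ a, ⟪A a, ξ m' a⟫ ∂P :=
        integral_sub (hintAmm m) (hintAmm m')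
      have J6 : ∫ a, η t ^ 2 * ‖ξ m a - ξ m' a‖ ^ 2 ∂P
          = η t ^ 2 * ∫ a, ‖ξ m a - ξ m' a‖ ^ 2 ∂P := integral_const_mul _ _
      rw [integral_congr_ae (Filter.Eventually.of_forall hexp), J1, J2, J3, J4, J5, J6]
    rw [e2, hcrossA m, hcrossA m']
    have h3 : η t ^ 2 * (∫ ω, ‖ξ m ω - ξ m' ω‖ ^ 2 ∂P) ≤ η t ^ 2 * (2 * σ ^ 2) :=
      mul_le_mul_of_nonneg_left hζbound (sq_nonneg _)
    have h4 : η t ^ 2 * (2 * σ ^ 2) = 2 * σ ^ 2 * η t ^ 2 := by ring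
    linarith
  have hKpos : 0 < K := hK
  have hMne : (M : ℝ) ≠ 0 := by positivity
  -- at averaging steps all machines coincide
  have hDavg : ∀ (t : ℕ) (mm m' : Fin M), (t + 1) % K = 0 → x (t+1) mm = x (t+1) m' := by
    intro t mm m' h
    funext ω
    rw [hxup t mm ω, hxup t m' ω, if_pos h, if_pos h]
  -- within-round bound by induction
  have hDbound : ∀ (t : ℕ) (m m' : Fin M), m ≠ m' →
      ∫ ω, ‖x t m ω - x t m' ω‖ ^ 2 ∂P
        ≤ 2 * σ ^ 2 * ((t % K : ℕ) : ℝ) * η (K * (t / K)) ^ 2 := by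
    intro t
    induction t with
    | zero =>
      intro m m' _
      simp [hx0]
    | succ t ih =>
      intro m m' hmm
      by_cases h : (t+1) % K = 0
      · rw [hDavg t m m' h]
        simp [h]
      · have h1 := hDrec t m m' hmm h
        have h2 := ih m m' hmm
        have hdvd : ¬ K ∣ (t+1) := by
          intro hc
          exact h ((Nat.mod_eq_zero_of_dvd hc))
        have hdiv : (t+1)/K = t/K := Nat.succ_div_of_not_dvd hdvd
        have hmod : (t+1) % K = t % K + 1 := by
          have a1 := Nat.div_add_mod t K
          have a2 := Nat.div_add_mod (t+1) K
          rw [hdiv] at a2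
          omega
        have hle : K * (t/K) ≤ t := Nat.mul_div_le t K
        have hη : η t ≤ η (K * (t/K)) := hηmono _ _ hle
        have hη2 : η t ^ 2 ≤ η (K * (t/K)) ^ 2 := pow_le_pow_left₀ (hηpos t).le hη 2
        have h5 : 2 * σ ^ 2 * η t ^ 2 ≤ 2 * σ ^ 2 * η (K * (t/K)) ^ 2 := by nlinarith
        rw [hmod, hdiv]
        push_cast
        nlinarith [h1, h2, h5]
  -- per-pair bound in the final form
  have hpair : ∀ (t : ℕ) (m m' : Fin M), m ≠ m' →
      ∫ ω, ‖x t m ω - x t m' ω‖ ^ 2 ∂P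
        ≤ 2 * σ ^ 2 * ((K : ℝ) - 1) * η (t + 1 - K) ^ 2 := by
    intro t m m' hmm
    refine (hDbound t m m' hmm).trans ?_
    have h0 : t % K + 1 ≤ K := Nat.mod_lt t hKpos
    have h1 : ((t % K : ℕ) : ℝ) ≤ (K : ℝ) - 1 := by
      have : ((t % K : ℕ) : ℝ) + 1 ≤ (K : ℝ) := by exact_mod_cast h0
      linarith
    have h2 : η (K * (t / K)) ≤ η (t + 1 - K) := by
      refine hηmono _ _ ?_
      have a1 := Nat.div_add_mod t K
      have a2 : t % K < K := Nat.mod_lt t hKpos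
      omega
    have h3 : η (K * (t/K)) ^ 2 ≤ η (t + 1 - K) ^ 2 :=
      pow_le_pow_left₀ (hηpos _).le h2 2
    have h4 : ((t % K : ℕ) : ℝ) * η (K * (t/K)) ^ 2
        ≤ ((K : ℝ) - 1) * η (t + 1 - K) ^ 2 := by
      refine mul_le_mul h1 h3 (sq_nonneg _) ?_
      have : (0:ℝ) ≤ ((t % K : ℕ) : ℝ) := Nat.cast_nonneg _
      linarith
    nlinarith [h4, hσ2]
  -- final assembly
  intro t m
  set B : ℝ := 2 * σ ^ 2 * ((K : ℝ) - 1) * η (t + 1 - K) ^ 2 with hB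
  have hbar : ∀ ω, x t m ω - (M:ℝ)⁻¹ • ∑ m' : Fin M, x t m' ω
      = (M:ℝ)⁻¹ • ∑ m' : Fin M, (x t m ω - x t m' ω) := by
    intro ω
    rw [Finset.sum_sub_distrib, smul_sub, Finset.sum_const, Finset.card_univ,
      Fintype.card_fin, ← Nat.cast_smul_eq_nsmul ℝ, smul_smul, inv_mul_cancel₀ hMne, one_smul]
  have hjensen : ∀ ω, ‖x t m ω - (M:ℝ)⁻¹ • ∑ m' : Fin M, x t m' ω‖ ^ 2
      ≤ (M:ℝ)⁻¹ * ∑ m' : Fin M, ‖x t m ω - x t m' ω‖ ^ 2 := by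
    intro ω
    have hns : ‖∑ m' : Fin M, (x t m ω - x t m' ω)‖
        ≤ ∑ m' : Fin M, ‖x t m ω - x t m' ω‖ := norm_sum_le _ _
    have hcs : (∑ m' : Fin M, ‖x t m ω - x t m' ω‖) ^ 2
        ≤ (M:ℝ) * ∑ m' : Fin M, ‖x t m ω - x t m' ω‖ ^ 2 := by
      have := sq_sum_le_card_mul_sum_sq
        (s := (Finset.univ : Finset (Fin M))) (f := fun m' => ‖x t m ω - x t m' ω‖)
      simpa [Finset.card_univ] using this
    calc ‖x t m ω - (M:ℝ)⁻¹ • ∑ m' : Fin M, x t m' ω‖ ^ 2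
        = ((M:ℝ)⁻¹) ^ 2 * ‖∑ m' : Fin M, (x t m ω - x t m' ω)‖ ^ 2 := by
          rw [hbar ω, norm_smul, Real.norm_eq_abs, abs_of_nonneg (by positivity), mul_pow]
      _ ≤ ((M:ℝ)⁻¹) ^ 2 * ((M:ℝ) * ∑ m' : Fin M, ‖x t m ω - x t m' ω‖ ^ 2) := by
          refine mul_le_mul_of_nonneg_left ?_ (by positivity)
          exact le_trans (pow_le_pow_left₀ (norm_nonneg _) hns 2) hcs
      _ = (M:ℝ)⁻¹ * ∑ m' : Fin M, ‖x t m ω - x t m' ω‖ ^ 2 := by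
          field_simp
  have hdiffL2 : MemLp (fun ω => x t m ω - (M:ℝ)⁻¹ • ∑ m' : Fin M, x t m' ω) 2 P := by
    refine (hxL2 t m).sub ?_
    exact (memLp_finset_sum Finset.univ fun m' _ => hxL2 t m').const_smul ((M:ℝ)⁻¹)
  have hintsum : Integrable
      (fun ω => (M:ℝ)⁻¹ * ∑ m' : Fin M, ‖x t m ω - x t m' ω‖ ^ 2) P :=
    (integrable_finset_sum _ fun m' _ =>
      lsgd_integrable_normsq ((hxL2 t m).sub (hxL2 t m'))).const_mul _
  have step1 : ∫ ω, ‖x t m ω - (M:ℝ)⁻¹ • ∑ m' : Fin M, x t m' ω‖ ^ 2 ∂P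
      ≤ ∫ ω, (M:ℝ)⁻¹ * ∑ m' : Fin M, ‖x t m ω - x t m' ω‖ ^ 2 ∂P :=
    integral_mono (lsgd_integrable_normsq hdiffL2) hintsum hjensen
  have step2 : ∫ ω, (M:ℝ)⁻¹ * ∑ m' : Fin M, ‖x t m ω - x t m' ω‖ ^ 2 ∂P
      = (M:ℝ)⁻¹ * ∑ m' : Fin M, ∫ ω, ‖x t m ω - x t m' ω‖ ^ 2 ∂P := by
    rw [integral_const_mul]
    congr 1
    exact integral_finset_sum _
      fun m' _ => lsgd_integrable_normsq ((hxL2 t m).sub (hxL2 t m'))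
  have hsum : ∑ m' : Fin M, ∫ ω, ‖x t m ω - x t m' ω‖ ^ 2 ∂P ≤ ((M:ℝ) - 1) * B := by
    have hsplit := Finset.add_sum_erase Finset.univ
      (fun m' => ∫ ω, ‖x t m ω - x t m' ω‖ ^ 2 ∂P) (Finset.mem_univ m)
    have hself : ∫ ω, ‖x t m ω - x t m ω‖ ^ 2 ∂P = 0 := by simp
    have herase : ∑ m' ∈ Finset.univ.erase m, ∫ ω, ‖x t m ω - x t m' ω‖ ^ 2 ∂P
        ≤ ((Finset.univ.erase m).card : ℝ) * B := by
      have := Finset.sum_le_card_nsmul (Finset.univ.erase m)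
        (fun m' => ∫ ω, ‖x t m ω - x t m' ω‖ ^ 2 ∂P) B
        (fun m' hm' => hpair t m m' (Ne.symm (Finset.mem_erase.mp hm').1))
      simpa [nsmul_eq_mul] using this
    have hcard : ((Finset.univ.erase m).card : ℝ) = (M:ℝ) - 1 := by
      rw [Finset.card_erase_of_mem (Finset.mem_univ m), Finset.card_univ, Fintype.card_fin]
      have : (1:ℕ) ≤ M := hM
      push_cast [this]
      ring
    have hsplit' : (∑ m' : Fin M, ∫ ω, ‖x t m ω - x t m' ω‖ ^ 2 ∂P)
        = (∫ ω, ‖x t m ω - x t m ω‖ ^ 2 ∂P)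
          + ∑ m' ∈ Finset.univ.erase m, ∫ ω, ‖x t m ω - x t m' ω‖ ^ 2 ∂P := hsplit.symm
    rw [hsplit', hself, zero_add, ← hcard]
    exact herase
  have hMB : (M:ℝ)⁻¹ * (((M:ℝ) - 1) * B)
      = 2 * ((M : ℝ) - 1) * ((K : ℝ) - 1) * σ ^ 2 / M * η (t + 1 - K) ^ 2 := by
    rw [hB]
    field_simp
  calc ∫ ω, ‖x t m ω - (M:ℝ)⁻¹ • ∑ m' : Fin M, x t m' ω‖ ^ 2 ∂P
      ≤ (M:ℝ)⁻¹ * ∑ m' : Fin M, ∫ ω, ‖x t m ω - x t m' ω‖ ^ 2 ∂P := by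
        rw [← step2]; exact step1
    _ ≤ (M:ℝ)⁻¹ * (((M:ℝ) - 1) * B) := by
        refine mul_le_mul_of_nonneg_left hsum (by positivity)
    _ = 2 * ((M : ℝ) - 1) * ((K : ℝ) - 1) * σ ^ 2 / M * η (t + 1 - K) ^ 2 := hMB
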